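/- Suppose T ⊥_{ωB} S and for each sequence {xₙ} of unit vectors with limₙ |⟨Txₙ, xₙ⟩| = ω(T) there exists a sequence {yₙ} of unit vectors with limₙ |⟨Syₙ, yₙ⟩| = ω(S) and limₙ |⟨xₙ, yₙ⟩| = 1. Then S ⊥_{ωB} T. -/

import Mathlib

open Filter Topology ComplexOrder
set_option linter.unusedSectionVars false

variable {H : Type*} [NormedAddCommGroup H] [InnerProductSpace ℂ H] [CompleteSpace H]

/-- The numerical radius of a bounded operator `T`:
`ω(T) = sup {|⟨Tx, x⟩| : ‖x‖ = 1}`. -/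
noncomputable def numRad (T : H →L[ℂ] H) : ℝ :=
  sSup {r : ℝ | ∃ x : H, ‖x‖ = 1 ∧ r = ‖(inner ℂ x (T x) : ℂ)‖}

lemma inner_apply_le_opNorm (A : H →L[ℂ] H) {x : H} (hx : ‖x‖ = 1) :
    ‖(inner ℂ x (A x) : ℂ)‖ ≤ ‖A‖ := by
  calc ‖(inner ℂ x (A x) : ℂ)‖ ≤ ‖x‖ * ‖A x‖ := norm_inner_le_norm x (A x)
    _ ≤ ‖x‖ * (‖A‖ * ‖x‖) := by gcongr; exact A.le_opNorm x
    _ = ‖A‖ := by rw [hx]; ring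

lemma numRad_bddAbove (A : H →L[ℂ] H) :
    BddAbove {r : ℝ | ∃ x : H, ‖x‖ = 1 ∧ r = ‖(inner ℂ x (A x) : ℂ)‖} := by
  refine ⟨‖A‖, ?_⟩
  rintro r ⟨x, hx, rfl⟩
  exact inner_apply_le_opNorm A hx

lemma le_numRad (A : H →L[ℂ] H) {x : H} (hx : ‖x‖ = 1) :
    ‖(inner ℂ x (A x) : ℂ)‖ ≤ numRad A :=
  le_csSup (numRad_bddAbove A) ⟨x, hx, rfl⟩

lemma numRad_nonneg (A : H →L[ℂ] H) : 0 ≤ numRad A := by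
  by_cases hne : ∃ x : H, ‖x‖ = 1
  · obtain ⟨x, hx⟩ := hne
    exact le_trans (norm_nonneg _) (le_numRad A hx)
  · have hs : {r : ℝ | ∃ x : H, ‖x‖ = 1 ∧ r = ‖(inner ℂ x (A x) : ℂ)‖} = ∅ := by
      ext r
      simp only [Set.mem_setOf_eq, Set.mem_empty_iff_false, iff_false]
      rintro ⟨x, hx, -⟩; exact hne ⟨x, hx⟩
    rw [numRad, hs, Real.sSup_empty]

lemma norm_add_sq_complex (a b : ℂ) :
    ‖a + b‖ ^ 2 = ‖a‖ ^ 2 + 2 * ((starRingEnd ℂ) a * b).re + ‖b‖ ^ 2 := by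
  simp only [Complex.sq_norm, Complex.normSq_apply, Complex.add_re,
    Complex.add_im, Complex.mul_re, Complex.conj_re, Complex.conj_im]
  ring

lemma inner_diff_le (A : H →L[ℂ] H) {y w : H} (hy : ‖y‖ = 1) (hw : ‖w‖ = 1) :
    ‖(inner ℂ y (A y) : ℂ) - inner ℂ w (A w)‖ ≤ 2 * ‖A‖ * ‖y - w‖ := by
  have hsplit : (inner ℂ y (A y) : ℂ) - inner ℂ w (A w)
      = inner ℂ (y - w) (A y) + inner ℂ w (A y - A w) := by
    simp only [inner_sub_left, inner_sub_right]; ring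
  rw [hsplit]
  have h1 : ‖(inner ℂ (y - w) (A y) : ℂ)‖ ≤ ‖y - w‖ * ‖A‖ := by
    calc ‖(inner ℂ (y - w) (A y) : ℂ)‖ ≤ ‖y - w‖ * ‖A y‖ := norm_inner_le_norm _ _
      _ ≤ ‖y - w‖ * ‖A‖ := by
          gcongr
          calc ‖A y‖ ≤ ‖A‖ * ‖y‖ := A.le_opNorm y
            _ = ‖A‖ := by rw [hy, mul_one]
  have h2 : ‖(inner ℂ w (A y - A w) : ℂ)‖ ≤ ‖A‖ * ‖y - w‖ := by
    calc ‖(inner ℂ w (A y - A w) : ℂ)‖ ≤ ‖w‖ * ‖A y - A w‖ := norm_inner_le_norm _ _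
      _ = ‖A (y - w)‖ := by rw [hw, one_mul, map_sub]
      _ ≤ ‖A‖ * ‖y - w‖ := A.le_opNorm _
  calc ‖(inner ℂ (y - w) (A y) : ℂ) + inner ℂ w (A y - A w)‖
      ≤ ‖(inner ℂ (y - w) (A y) : ℂ)‖ + ‖(inner ℂ w (A y - A w) : ℂ)‖ := norm_add_le _ _
    _ ≤ 2 * ‖A‖ * ‖y - w‖ := by linarith

/-- Numerical radius Birkhoff orthogonality: `ω(T + λS) ≥ ω(T)` for all `λ ∈ ℂ`. -/
def wBOrth (T S : H →L[ℂ] H) : Prop :=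
  ∀ lam : ℂ, numRad T ≤ numRad (T + lam • S)

set_option maxHeartbeats 1000000 in
theorem stmt_10 (T S : H →L[ℂ] H) (h : wBOrth T S)
    (hseq : ∀ x : ℕ → H, (∀ n, ‖x n‖ = 1) →
      Tendsto (fun n => ‖(inner ℂ (x n) (T (x n)) : ℂ)‖) atTop (𝓝 (numRad T)) →
      ∃ y : ℕ → H, (∀ n, ‖y n‖ = 1) ∧
        Tendsto (fun n => ‖(inner ℂ (y n) (S (y n)) : ℂ)‖) atTop (𝓝 (numRad S)) ∧
        Tendsto (fun n => ‖(inner ℂ (x n) (y n) : ℂ)‖) atTop (𝓝 1)) :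
    wBOrth S T := by
  intro lam
  by_cases hne : ∃ x : H, ‖x‖ = 1
  swap
  · have hz : ∀ A : H →L[ℂ] H, numRad A = 0 := by
      intro A
      have hs : {r : ℝ | ∃ x : H, ‖x‖ = 1 ∧ r = ‖(inner ℂ x (A x) : ℂ)‖} = ∅ := by
        ext r
        simp only [Set.mem_setOf_eq, Set.mem_empty_iff_false, iff_false]
        rintro ⟨x, hx, -⟩; exact hne ⟨x, hx⟩
      rw [numRad, hs, Real.sSup_empty]
    rw [hz S, hz (S + lam • T)]
  -- main case
  set ν : ℂ := (starRingEnd ℂ) lam with hν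
  set e : ℕ → ℝ := fun k => 1 / (k + 1) with he_def
  have he_pos : ∀ k, 0 < e k := fun k => by positivity
  have he0 : Tendsto e atTop (𝓝 0) := tendsto_one_div_add_atTop_nhds_zero_nat
  set μ : ℕ → ℂ := fun k => (e k : ℂ) * ν with hμ
  have hμnorm : ∀ k, ‖μ k‖ = e k * ‖ν‖ := by
    intro k
    rw [hμ]
    simp only [norm_mul, Complex.norm_real, Real.norm_eq_abs]
    rw [abs_of_pos (he_pos k)]
  have hex : ∀ k : ℕ, ∃ x : H, ‖x‖ = 1 ∧
      numRad (T + μ k • S) - e k ^ 2 < ‖(inner ℂ x ((T + μ k • S) x) : ℂ)‖ := by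
    intro k
    obtain ⟨x₀, hx₀⟩ := hne
    have hlt : numRad (T + μ k • S) - e k ^ 2
        < sSup {r : ℝ | ∃ x : H, ‖x‖ = 1 ∧ r = ‖(inner ℂ x ((T + μ k • S) x) : ℂ)‖} := by
      have h1 : 0 < e k ^ 2 := by positivity
      have : numRad (T + μ k • S)
          = sSup {r : ℝ | ∃ x : H, ‖x‖ = 1 ∧ r = ‖(inner ℂ x ((T + μ k • S) x) : ℂ)‖} := rfl
      linarith
    have hnonempty : {r : ℝ | ∃ x : H, ‖x‖ = 1 ∧ r = ‖(inner ℂ x ((T + μ k • S) x) : ℂ)‖}.Nonempty :=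
      ⟨_, x₀, hx₀, rfl⟩
    obtain ⟨r, hrmem, hr⟩ := exists_lt_of_lt_csSup hnonempty hlt
    obtain ⟨z, hz, rfl⟩ := hrmem
    exact ⟨z, hz, hr⟩
  choose x hx hxlt using hex
  have hγ : ∀ k, (inner ℂ (x k) ((T + μ k • S) (x k)) : ℂ)
      = inner ℂ (x k) (T (x k)) + μ k * inner ℂ (x k) (S (x k)) := by
    intro k
    simp [ContinuousLinearMap.add_apply, ContinuousLinearMap.smul_apply,
      inner_add_right, inner_smul_right]
  have hαle : ∀ k, ‖(inner ℂ (x k) (T (x k)) : ℂ)‖ ≤ numRad T := fun k => le_numRad T (hx k)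
  have hβle : ∀ k, ‖(inner ℂ (x k) (S (x k)) : ℂ)‖ ≤ numRad S := fun k => le_numRad S (hx k)
  have hkey : ∀ k, numRad T - e k ^ 2
      < ‖(inner ℂ (x k) (T (x k)) : ℂ) + μ k * inner ℂ (x k) (S (x k))‖ := by
    intro k
    have h1 := h (μ k)
    have h2 := hxlt k
    rw [hγ k] at h2
    linarith
  have hlow : ∀ k, numRad T - e k ^ 2 - e k * (‖ν‖ * numRad S)
      ≤ ‖(inner ℂ (x k) (T (x k)) : ℂ)‖ := by
    intro k
    have h1 := hkey k
    have h2 := norm_add_le (inner ℂ (x k) (T (x k)) : ℂ) (μ k * inner ℂ (x k) (S (x k)))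
    have h3 : ‖μ k * (inner ℂ (x k) (S (x k)) : ℂ)‖ ≤ e k * (‖ν‖ * numRad S) := by
      rw [norm_mul, hμnorm k]
      rw [mul_assoc]
      exact mul_le_mul_of_nonneg_left
        (mul_le_mul_of_nonneg_left (hβle k) (norm_nonneg ν)) (he_pos k).le
    linarith
  have hαtend : Tendsto (fun k => ‖(inner ℂ (x k) (T (x k)) : ℂ)‖) atTop (𝓝 (numRad T)) := by
    apply tendsto_of_tendsto_of_tendsto_of_le_of_le
      (g := fun k => numRad T - e k ^ 2 - e k * (‖ν‖ * numRad S)) (h := fun _ => numRad T)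
    · have h1 : Tendsto (fun k => numRad T - e k ^ 2 - e k * (‖ν‖ * numRad S)) atTop
          (𝓝 (numRad T - 0 ^ 2 - 0 * (‖ν‖ * numRad S))) :=
        (tendsto_const_nhds.sub (he0.pow 2)).sub (he0.mul_const _)
      simpa using h1
    · exact tendsto_const_nhds
    · exact hlow
    · exact hαle
  -- the Re lower bound
  have hre : ∀ k, -(numRad T + ‖ν‖ ^ 2 * numRad S ^ 2 / 2) * e k
      ≤ (ν * inner ℂ (x k) (S (x k)) * (starRingEnd ℂ) (inner ℂ (x k) (T (x k)))).re := by
    intro k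
    set a : ℂ := inner ℂ (x k) (T (x k)) with ha
    set b : ℂ := inner ℂ (x k) (S (x k)) with hb
    have hsq : ‖a + μ k * b‖ ^ 2
        = ‖a‖ ^ 2 + 2 * (e k * (ν * b * (starRingEnd ℂ) a).re) + (e k * (‖ν‖ * ‖b‖)) ^ 2 := by
      rw [norm_add_sq_complex]
      congr 1
      · congr 1
        have h1 : (starRingEnd ℂ) a * (μ k * b) = (e k : ℂ) * (ν * b * (starRingEnd ℂ) a) := by
          rw [hμ]; ring
        rw [h1, Complex.re_ofReal_mul]
      · rw [norm_mul, hμnorm k]; ring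
    have hγ2 : numRad T ^ 2 - 2 * e k ^ 2 * numRad T ≤ ‖a + μ k * b‖ ^ 2 := by
      rcases le_or_gt (numRad T - e k ^ 2) 0 with hcase | hcase
      · nlinarith [norm_nonneg (a + μ k * b), numRad_nonneg T, he_pos k, sq_nonneg (e k)]
      · nlinarith [hkey k]
    have hα2 : ‖a‖ ^ 2 ≤ numRad T ^ 2 := by
      nlinarith [hαle k, norm_nonneg a, numRad_nonneg T]
    have hβ2 : ‖b‖ ^ 2 ≤ numRad S ^ 2 := by
      nlinarith [hβle k, norm_nonneg b, numRad_nonneg S]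
    have h5 : e k ^ 2 * ‖ν‖ ^ 2 * ‖b‖ ^ 2 ≤ e k ^ 2 * ‖ν‖ ^ 2 * numRad S ^ 2 := by
      have : (0:ℝ) ≤ e k ^ 2 * ‖ν‖ ^ 2 := by positivity
      nlinarith
    have h6 : 0 ≤ 2 * e k * ((ν * b * (starRingEnd ℂ) a).re
        + (numRad T + ‖ν‖ ^ 2 * numRad S ^ 2 / 2) * e k) := by nlinarith
    nlinarith [he_pos k, h6]
  obtain ⟨y, hy, hSy, hxy⟩ := hseq x hx hαtend
  set c : ℕ → ℂ := fun k => inner ℂ (x k) (y k) with hc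
  have hcnorm : Tendsto (fun k => ‖c k‖) atTop (𝓝 1) := hxy
  set c' : ℕ → ℂ := fun k => if c k = 0 then 1 else c k / (‖c k‖ : ℂ) with hc'
  have hc'norm : ∀ k, ‖c' k‖ = 1 := by
    intro k
    rw [hc']
    dsimp only
    split_ifs with h0
    · simp
    · rw [norm_div, Complex.norm_real, Real.norm_eq_abs, abs_norm,
        div_self (norm_ne_zero_iff.mpr h0)]
  set w : ℕ → H := fun k => c' k • x k with hw
  have hwnorm : ∀ k, ‖w k‖ = 1 := by
    intro k; rw [hw]; dsimp only; rw [norm_smul, hc'norm, hx, one_mul]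
  have hc'c : ∀ k, (starRingEnd ℂ) (c' k) * c' k = 1 := by
    intro k
    rw [mul_comm, Complex.mul_conj]
    norm_cast
    rw [Complex.normSq_eq_norm_sq, hc'norm]
    norm_num
  have hwinner : ∀ (A : H →L[ℂ] H) (k : ℕ),
      (inner ℂ (w k) (A (w k)) : ℂ) = inner ℂ (x k) (A (x k)) := by
    intro A k
    rw [hw]; dsimp only
    rw [map_smul, inner_smul_left, inner_smul_right, ← mul_assoc, hc'c, one_mul]
  have hev : ∀ᶠ k in atTop, (1:ℝ)/2 < ‖c k‖ :=
    hcnorm.eventually (eventually_gt_nhds (by norm_num))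
  have hsqeq : ∀ᶠ k in atTop, ‖y k - w k‖ ^ 2 = 2 - 2 * ‖c k‖ := by
    filter_upwards [hev] with k hk
    have hck : c k ≠ 0 := by
      intro h0; rw [h0, norm_zero] at hk; linarith
    have h1 : ‖y k - w k‖ ^ 2
        = ‖y k‖ ^ 2 - 2 * RCLike.re (inner ℂ (y k) (w k) : ℂ) + ‖w k‖ ^ 2 :=
      norm_sub_sq (𝕜 := ℂ) _ _
    have h2 : (inner ℂ (y k) (w k) : ℂ) = (‖c k‖ : ℂ) := by
      rw [hw]; dsimp only
      rw [inner_smul_right]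
      have h3 : (inner ℂ (y k) (x k) : ℂ) = (starRingEnd ℂ) (c k) := by
        rw [hc]; dsimp only; rw [← inner_conj_symm]
      rw [h3, hc']; dsimp only
      rw [if_neg hck, div_mul_eq_mul_div, Complex.mul_conj, Complex.normSq_eq_norm_sq,
        show ((‖c k‖ ^ 2 : ℝ) : ℂ) = (‖c k‖ : ℂ) ^ 2 by push_cast; ring]
      rw [sq]
      rw [mul_div_assoc, div_self (by exact_mod_cast norm_ne_zero_iff.mpr hck), mul_one]
    rw [h1, h2, hy k, hwnorm k]
    simp [RCLike.re_to_complex]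
    ring
  have hywsq : Tendsto (fun k => ‖y k - w k‖ ^ 2) atTop (𝓝 0) := by
    have h1 : Tendsto (fun k => 2 - 2 * ‖c k‖) atTop (𝓝 (2 - 2 * 1)) :=
      tendsto_const_nhds.sub (hcnorm.const_mul 2)
    norm_num at h1
    exact h1.congr' (hsqeq.mono fun k hk => hk.symm)
  have hyw : Tendsto (fun k => ‖y k - w k‖) atTop (𝓝 0) := by
    have h1 := hywsq.sqrt
    rw [Real.sqrt_zero] at h1
    refine h1.congr fun k => ?_
    rw [Real.sqrt_sq (norm_nonneg _)]
  have hdiff : ∀ A : H →L[ℂ] H, Tendsto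
      (fun k => ((inner ℂ (y k) (A (y k)) : ℂ) - inner ℂ (x k) (A (x k)))) atTop (𝓝 0) := by
    intro A
    rw [tendsto_zero_iff_norm_tendsto_zero]
    have hbd : ∀ k, ‖(inner ℂ (y k) (A (y k)) : ℂ) - inner ℂ (x k) (A (x k))‖
        ≤ 2 * ‖A‖ * ‖y k - w k‖ := by
      intro k
      rw [← hwinner A k]
      exact inner_diff_le A (hy k) (hwnorm k)
    have hg : Tendsto (fun k => 2 * ‖A‖ * ‖y k - w k‖) atTop (𝓝 0) := by
      have := hyw.const_mul (2 * ‖A‖)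
      simpa using this
    exact squeeze_zero (fun k => norm_nonneg _) hbd hg
  have hRR' : Tendsto (fun k =>
      (ν * inner ℂ (y k) (S (y k)) * (starRingEnd ℂ) (inner ℂ (y k) (T (y k)))).re
      - (ν * inner ℂ (x k) (S (x k)) * (starRingEnd ℂ) (inner ℂ (x k) (T (x k)))).re)
      atTop (𝓝 0) := by
    have hnT := tendsto_zero_iff_norm_tendsto_zero.mp (hdiff T)
    have hnS := tendsto_zero_iff_norm_tendsto_zero.mp (hdiff S)
    have hg : Tendsto (fun k => ‖ν‖ *
        (‖(inner ℂ (y k) (S (y k)) : ℂ) - inner ℂ (x k) (S (x k))‖ * ‖T‖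
          + numRad S * ‖(inner ℂ (y k) (T (y k)) : ℂ) - inner ℂ (x k) (T (x k))‖)) atTop (𝓝 0) := by
      have h2 := ((hnS.mul_const ‖T‖).add (hnT.const_mul (numRad S))).const_mul ‖ν‖
      simpa using h2
    refine squeeze_zero_norm (fun k => ?_) hg
    have h1 : (ν * (inner ℂ (y k) (S (y k)) : ℂ) * (starRingEnd ℂ) (inner ℂ (y k) (T (y k)) : ℂ)).re
        - (ν * (inner ℂ (x k) (S (x k)) : ℂ) * (starRingEnd ℂ) (inner ℂ (x k) (T (x k)) : ℂ)).re
        = (ν * (((inner ℂ (y k) (S (y k)) : ℂ) - (inner ℂ (x k) (S (x k)) : ℂ))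
            * (starRingEnd ℂ) (inner ℂ (y k) (T (y k)) : ℂ)
          + (inner ℂ (x k) (S (x k)) : ℂ)
            * (starRingEnd ℂ) ((inner ℂ (y k) (T (y k)) : ℂ) - (inner ℂ (x k) (T (x k)) : ℂ)))).re := by
      rw [map_sub]
      rw [show ν * (((inner ℂ (y k) (S (y k)) : ℂ) - (inner ℂ (x k) (S (x k)) : ℂ))
            * (starRingEnd ℂ) (inner ℂ (y k) (T (y k)) : ℂ)
          + (inner ℂ (x k) (S (x k)) : ℂ)
            * ((starRingEnd ℂ) (inner ℂ (y k) (T (y k)) : ℂ)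
              - (starRingEnd ℂ) (inner ℂ (x k) (T (x k)) : ℂ)))
        = ν * (inner ℂ (y k) (S (y k)) : ℂ) * (starRingEnd ℂ) (inner ℂ (y k) (T (y k)) : ℂ)
          - ν * (inner ℂ (x k) (S (x k)) : ℂ) * (starRingEnd ℂ) (inner ℂ (x k) (T (x k)) : ℂ) by ring]
      rw [Complex.sub_re]
    rw [Real.norm_eq_abs, h1]
    have h2 : ‖((inner ℂ (y k) (S (y k)) : ℂ) - (inner ℂ (x k) (S (x k)) : ℂ))
          * (starRingEnd ℂ) (inner ℂ (y k) (T (y k)) : ℂ)‖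
        ≤ ‖(inner ℂ (y k) (S (y k)) : ℂ) - (inner ℂ (x k) (S (x k)) : ℂ)‖ * ‖T‖ := by
      rw [norm_mul, RCLike.norm_conj]
      exact mul_le_mul_of_nonneg_left (inner_apply_le_opNorm T (hy k)) (norm_nonneg _)
    have h3 : ‖(inner ℂ (x k) (S (x k)) : ℂ)
          * (starRingEnd ℂ) ((inner ℂ (y k) (T (y k)) : ℂ) - (inner ℂ (x k) (T (x k)) : ℂ))‖
        ≤ numRad S * ‖(inner ℂ (y k) (T (y k)) : ℂ) - (inner ℂ (x k) (T (x k)) : ℂ)‖ := by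
      rw [norm_mul, RCLike.norm_conj]
      exact mul_le_mul_of_nonneg_right (le_numRad S (hx k)) (norm_nonneg _)
    calc |(ν * (((inner ℂ (y k) (S (y k)) : ℂ) - (inner ℂ (x k) (S (x k)) : ℂ))
            * (starRingEnd ℂ) (inner ℂ (y k) (T (y k)) : ℂ)
          + (inner ℂ (x k) (S (x k)) : ℂ)
            * (starRingEnd ℂ) ((inner ℂ (y k) (T (y k)) : ℂ) - (inner ℂ (x k) (T (x k)) : ℂ)))).re|
        ≤ ‖ν * (((inner ℂ (y k) (S (y k)) : ℂ) - (inner ℂ (x k) (S (x k)) : ℂ))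
            * (starRingEnd ℂ) (inner ℂ (y k) (T (y k)) : ℂ)
          + (inner ℂ (x k) (S (x k)) : ℂ)
            * (starRingEnd ℂ) ((inner ℂ (y k) (T (y k)) : ℂ) - (inner ℂ (x k) (T (x k)) : ℂ)))‖ :=
          Complex.abs_re_le_norm _
      _ = ‖ν‖ * ‖((inner ℂ (y k) (S (y k)) : ℂ) - (inner ℂ (x k) (S (x k)) : ℂ))
            * (starRingEnd ℂ) (inner ℂ (y k) (T (y k)) : ℂ)
          + (inner ℂ (x k) (S (x k)) : ℂ)
            * (starRingEnd ℂ) ((inner ℂ (y k) (T (y k)) : ℂ) - (inner ℂ (x k) (T (x k)) : ℂ))‖ :=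
          norm_mul _ _
      _ ≤ ‖ν‖ * (‖(inner ℂ (y k) (S (y k)) : ℂ) - (inner ℂ (x k) (S (x k)) : ℂ)‖ * ‖T‖
          + numRad S * ‖(inner ℂ (y k) (T (y k)) : ℂ) - (inner ℂ (x k) (T (x k)) : ℂ)‖) := by
          refine mul_le_mul_of_nonneg_left ?_ (norm_nonneg ν)
          exact le_trans (norm_add_le _ _) (add_le_add h2 h3)
  have hfin : ∀ k, ‖(inner ℂ (y k) (S (y k)) : ℂ)‖ ^ 2
      + 2 * (-(numRad T + ‖ν‖ ^ 2 * numRad S ^ 2 / 2) * e k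
        + ((ν * inner ℂ (y k) (S (y k)) * (starRingEnd ℂ) (inner ℂ (y k) (T (y k)))).re
          - (ν * inner ℂ (x k) (S (x k)) * (starRingEnd ℂ) (inner ℂ (x k) (T (x k)))).re))
      ≤ numRad (S + lam • T) ^ 2 := by
    intro k
    have h1 : ‖(inner ℂ (y k) ((S + lam • T) (y k)) : ℂ)‖ ≤ numRad (S + lam • T) :=
      le_numRad _ (hy k)
    have h2 : (inner ℂ (y k) ((S + lam • T) (y k)) : ℂ)
        = inner ℂ (y k) (S (y k)) + lam * inner ℂ (y k) (T (y k)) := by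
      simp [ContinuousLinearMap.add_apply, ContinuousLinearMap.smul_apply,
        inner_add_right, inner_smul_right]
    rw [h2] at h1
    have h3 := norm_add_sq_complex (inner ℂ (y k) (S (y k)) : ℂ)
      (lam * inner ℂ (y k) (T (y k)))
    have h4 : ((starRingEnd ℂ) (inner ℂ (y k) (S (y k)) : ℂ)
        * (lam * inner ℂ (y k) (T (y k)))).re
        = (ν * inner ℂ (y k) (S (y k)) * (starRingEnd ℂ) (inner ℂ (y k) (T (y k)))).re := by
      have h5 : (ν * (inner ℂ (y k) (S (y k)) : ℂ) * (starRingEnd ℂ) (inner ℂ (y k) (T (y k))))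
          = (starRingEnd ℂ) ((starRingEnd ℂ) (inner ℂ (y k) (S (y k)) : ℂ)
            * (lam * inner ℂ (y k) (T (y k)))) := by
        rw [hν]
        simp only [map_mul, Complex.conj_conj]
        ring
      rw [h5, Complex.conj_re]
    have h6 : 0 ≤ numRad (S + lam • T) := numRad_nonneg _
    have h7 := hre k
    have hsq1 : ‖(inner ℂ (y k) (S (y k)) : ℂ) + lam * inner ℂ (y k) (T (y k))‖ ^ 2
        ≤ numRad (S + lam • T) ^ 2 := pow_le_pow_left₀ (norm_nonneg _) h1 2
    have h8 : (0:ℝ) ≤ ‖lam * (inner ℂ (y k) (T (y k)) : ℂ)‖ ^ 2 := sq_nonneg _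
    linarith [h3, h4, h7, hsq1, h8]
  have hlim : Tendsto (fun k => ‖(inner ℂ (y k) (S (y k)) : ℂ)‖ ^ 2
      + 2 * (-(numRad T + ‖ν‖ ^ 2 * numRad S ^ 2 / 2) * e k
        + ((ν * inner ℂ (y k) (S (y k)) * (starRingEnd ℂ) (inner ℂ (y k) (T (y k)))).re
          - (ν * inner ℂ (x k) (S (x k)) * (starRingEnd ℂ) (inner ℂ (x k) (T (x k)))).re)))
      atTop (𝓝 (numRad S ^ 2)) := by
    have h1 := hSy.pow 2
    have h2 : Tendsto (fun k => -(numRad T + ‖ν‖ ^ 2 * numRad S ^ 2 / 2) * e k) atTop (𝓝 0) := by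
      have h2' := he0.const_mul (-(numRad T + ‖ν‖ ^ 2 * numRad S ^ 2 / 2))
      rw [mul_zero] at h2'
      exact h2'
    have h4 := h1.add ((h2.add hRR').const_mul (2:ℝ))
    have h5 : numRad S ^ 2 + 2 * ((0:ℝ) + 0) = numRad S ^ 2 := by ring
    rw [h5] at h4
    exact h4
  have hle2 : numRad S ^ 2 ≤ numRad (S + lam • T) ^ 2 :=
    le_of_tendsto hlim (Eventually.of_forall hfin)
  nlinarith [numRad_nonneg S, numRad_nonneg (S + lam • T)]
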